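/- If f(z) = z + a_2 z² + a_3 z³ + ⋯ belongs to the class 𝓕, then |a_2| ≤ 3/2 and |3a_3 - 2a_2²| ≤ 3/2. -/

import Mathlib

open Complex Metric Set Real intervalIntegral

/-- The class 𝓕 of normalized locally univalent analytic functions on the unit disk
satisfying `Re (1 + z f''(z)/f'(z)) > -1/2`. -/
def IsInClassF (f : ℂ → ℂ) : Prop :=
  AnalyticOnNhd ℂ f (ball (0 : ℂ) 1) ∧ f 0 = 0 ∧ deriv f 0 = 1 ∧
    (∀ z ∈ ball (0 : ℂ) 1, deriv f z ≠ 0) ∧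
    (∀ z ∈ ball (0 : ℂ) 1, (1 + z * deriv (deriv f) z / deriv f z).re > -(1/2))

/-- The `n`-th section (partial sum) `s_n(f)(z) = z + ∑_{k=2}^n a_k z^k`, where
`a_k = f^{(k)}(0)/k!`. -/
noncomputable def sectionF (f : ℂ → ℂ) (n : ℕ) (z : ℂ) : ℂ :=
  ∑ k ∈ Finset.Icc 1 n, (iteratedDeriv k f 0 / (Nat.factorial k)) * z ^ k

lemma intervalIntegral_conj' {F : ℝ → ℂ} {a b : ℝ} :
    (∫ θ in a..b, (starRingEnd ℂ) (F θ)) = (starRingEnd ℂ) (∫ θ in a..b, F θ) := by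
  simp only [intervalIntegral, ← integral_conj, map_sub]

lemma circleAvg {r : ℝ} (hr0 : 0 < r) {g : ℂ → ℂ}
    (hg : DifferentiableOn ℂ g (closedBall (0:ℂ) r)) :
    (∫ θ in (0:ℝ)..(2*π), g (circleMap 0 r θ)) = 2 * π * g 0 := by
  have hC := hg.circleIntegral_sub_inv_smul (mem_ball_self hr0)
  simp only [circleIntegral, deriv_circleMap, sub_zero, smul_eq_mul] at hC
  have heq : ∀ θ ∈ uIcc (0:ℝ) (2*π),
      circleMap 0 r θ * I * ((circleMap 0 r θ)⁻¹ * g (circleMap 0 r θ))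
        = I * g (circleMap 0 r θ) := by
    intro θ _
    have hz := circleMap_ne_center (c := (0:ℂ)) hr0.ne' (θ := θ)
    field_simp
  rw [intervalIntegral.integral_congr heq, intervalIntegral.integral_const_mul] at hC
  exact mul_left_cancel₀ I_ne_zero (hC.trans (by ring))

lemma carath_r (p : ℂ → ℂ) (hp : AnalyticOnNhd ℂ p (ball (0:ℂ) 1)) (h0 : p 0 = 1)
    (hre : ∀ z ∈ ball (0:ℂ) 1, 0 < (p z).re) {r : ℝ} (hr0 : 0 < r) (hr1 : r < 1)
    (n : ℕ) (hn : 1 ≤ n) :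
    ‖iteratedDeriv n p 0‖ ≤ 2 * n.factorial / r ^ n := by
  have hsub : closedBall (0:ℂ) r ⊆ ball 0 1 := closedBall_subset_ball hr1
  have hd : DifferentiableOn ℂ p (closedBall (0:ℂ) r) :=
    fun z hz => (hp z (hsub hz)).differentiableWithinAt
  have hmem : ∀ θ : ℝ, circleMap 0 r θ ∈ ball (0:ℂ) 1 := by
    intro θ
    simp [mem_ball_zero_iff, norm_circleMap_zero, abs_of_pos hr0, hr1]
  have hz_ne : ∀ θ : ℝ, circleMap 0 r θ ≠ 0 :=
    fun θ => circleMap_ne_center hr0.ne' 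
  have habs : ∀ θ : ℝ, ‖circleMap 0 r θ‖ = r := by
    intro θ; rw [norm_circleMap_zero, abs_of_pos hr0]
  have hcp : Continuous fun θ => p (circleMap 0 r θ) :=
    hp.continuousOn.comp_continuous (continuous_circleMap 0 r) hmem
  have hcz : ∀ m : ℤ, Continuous fun θ => (circleMap 0 r θ) ^ m :=
    fun m => (continuous_circleMap 0 r).zpow₀ m (fun θ => Or.inl (hz_ne θ))
  -- basic integrals
  have K0 : (∫ θ in (0:ℝ)..(2*π), p (circleMap 0 r θ)) = 2 * π := by
    rw [circleAvg hr0 hd, h0, mul_one]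
  have Kpos : ∀ m : ℕ, 1 ≤ m →
      (∫ θ in (0:ℝ)..(2*π), (circleMap 0 r θ) ^ m * p (circleMap 0 r θ)) = 0 := by
    intro m hm
    have hgd : DifferentiableOn ℂ (fun z => z ^ m * p z) (closedBall (0:ℂ) r) :=
      (differentiable_pow m).differentiableOn.mul hd
    have := circleAvg hr0 hgd
    rwa [zero_pow (by omega), zero_mul, mul_zero] at this
  have Kconj : ∀ m : ℕ, 1 ≤ m →
      (∫ θ in (0:ℝ)..(2*π), (circleMap 0 r θ) ^ (-(m:ℤ)) *
        (starRingEnd ℂ) (p (circleMap 0 r θ))) = 0 := by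
    intro m hm
    have hptw : ∀ θ : ℝ, (circleMap 0 r θ) ^ (-(m:ℤ)) * (starRingEnd ℂ) (p (circleMap 0 r θ))
        = ((r:ℂ)^2)⁻¹ ^ m *
          (starRingEnd ℂ) ((circleMap 0 r θ) ^ m * p (circleMap 0 r θ)) := by
      intro θ
      have h1 : (starRingEnd ℂ) (circleMap 0 r θ) = (r:ℂ)^2 * (circleMap 0 r θ)⁻¹ := by
        rw [eq_comm, mul_inv_eq_iff_eq_mul₀ (hz_ne θ), mul_comm, Complex.mul_conj]
        rw [Complex.normSq_eq_norm_sq, habs θ]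
        push_cast
        ring
      rw [map_mul, map_pow, h1, mul_pow, zpow_neg, zpow_natCast]
      have hr2 : ((r:ℂ)^2) ≠ 0 := by
        simp [hr0.ne']
      field_simp
      rw [mul_assoc ((starRingEnd ℂ) _), one_div_pow, one_div_mul_cancel (pow_ne_zero _ hr2),
        mul_one, one_div_pow, mul_one_div]
    calc (∫ θ in (0:ℝ)..(2*π), (circleMap 0 r θ) ^ (-(m:ℤ)) *
        (starRingEnd ℂ) (p (circleMap 0 r θ)))
        = ∫ θ in (0:ℝ)..(2*π), ((r:ℂ)^2)⁻¹ ^ m *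
            (starRingEnd ℂ) ((circleMap 0 r θ) ^ m * p (circleMap 0 r θ)) := by
          exact intervalIntegral.integral_congr (fun θ _ => hptw θ)
      _ = ((r:ℂ)^2)⁻¹ ^ m * (starRingEnd ℂ)
            (∫ θ in (0:ℝ)..(2*π), (circleMap 0 r θ) ^ m * p (circleMap 0 r θ)) := by
          rw [intervalIntegral.integral_const_mul, intervalIntegral_conj']
      _ = 0 := by rw [Kpos m hm]; simp
  -- the key negative-index integral
  set Kn : ℂ := ∫ θ in (0:ℝ)..(2*π), (circleMap 0 r θ) ^ (-(n:ℤ)) * p (circleMap 0 r θ)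
    with hKn
  have hcontm : Continuous fun θ => (circleMap 0 r θ) ^ (-(n:ℤ)) * p (circleMap 0 r θ) :=
    (hcz _).mul hcp
  have hcontc : Continuous fun θ =>
      (circleMap 0 r θ) ^ (-(n:ℤ)) * (starRingEnd ℂ) (p (circleMap 0 r θ)) :=
    (hcz _).mul (continuous_star.comp hcp)
  have key : Kn = ∫ θ in (0:ℝ)..(2*π),
      (circleMap 0 r θ) ^ (-(n:ℤ)) * ((2 * (p (circleMap 0 r θ)).re : ℝ) : ℂ) := by
    have hpt : ∀ θ ∈ uIcc (0:ℝ) (2*π), (circleMap 0 r θ) ^ (-(n:ℤ)) *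
        ((2 * (p (circleMap 0 r θ)).re : ℝ) : ℂ)
        = (circleMap 0 r θ) ^ (-(n:ℤ)) * p (circleMap 0 r θ)
          + (circleMap 0 r θ) ^ (-(n:ℤ)) * (starRingEnd ℂ) (p (circleMap 0 r θ)) := by
      intro θ _
      rw [← mul_add]
      congr 1
      rw [Complex.add_conj]
    rw [intervalIntegral.integral_congr hpt,
      intervalIntegral.integral_add (hcontm.intervalIntegrable _ _)
        (hcontc.intervalIntegrable _ _), Kconj n hn, add_zero]
  have hintre : (∫ θ in (0:ℝ)..(2*π), (p (circleMap 0 r θ)).re) = 2*π := by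
    have := Complex.reCLM.intervalIntegral_comp_comm
      (a := (0:ℝ)) (b := 2*π) (hcp.intervalIntegrable (μ := MeasureTheory.volume) _ _)
    simp only [Complex.reCLM_apply] at this
    rw [this, K0]
    simp
  have hbound : ‖Kn‖ ≤ (4*π) / r ^ n := by
    rw [key]
    have h2π : (0:ℝ) ≤ 2*π := by positivity
    refine (intervalIntegral.norm_integral_le_integral_norm h2π).trans ?_
    have hptn : ∀ θ ∈ uIcc (0:ℝ) (2*π), ‖(circleMap 0 r θ) ^ (-(n:ℤ)) *
        ((2 * (p (circleMap 0 r θ)).re : ℝ) : ℂ)‖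
        = (r ^ n)⁻¹ * (2 * (p (circleMap 0 r θ)).re) := by
      intro θ _
      have hre' : 0 < (p (circleMap 0 r θ)).re := hre _ (hmem θ)
      rw [norm_mul, norm_zpow, habs θ, Complex.norm_real,
        Real.norm_eq_abs, abs_of_pos (by positivity), zpow_neg, zpow_natCast]
    rw [intervalIntegral.integral_congr hptn, intervalIntegral.integral_const_mul]
    have : (∫ θ in (0:ℝ)..(2*π), 2 * (p (circleMap 0 r θ)).re) = 4*π := by
      rw [intervalIntegral.integral_const_mul, hintre]; ring
    rw [this]
    rw [div_eq_inv_mul]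
  -- relate to the Taylor coefficient via the Cauchy power series
  have hdR : DifferentiableOn ℂ p (closedBall (0:ℂ) ((⟨r, hr0.le⟩ : NNReal) : ℝ)) := hd
  have H := hdR.hasFPowerSeriesOnBall (R := ⟨r, hr0.le⟩) (by exact_mod_cast hr0)
  have hfact := H.factorial_smul (1:ℂ) n
  have hiter : iteratedDeriv n p 0
      = (n.factorial : ℂ) * (cauchyPowerSeries p 0 r n fun _ => (1:ℂ)) := by
    rw [iteratedDeriv_eq_iteratedFDeriv, ← hfact]
    simp [nsmul_eq_mul]
    left; rfl
  have hcoeff : (cauchyPowerSeries p 0 r n fun _ => (1:ℂ)) = (2*π*I)⁻¹ * (I * Kn) := by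
    rw [cauchyPowerSeries_apply]
    simp only [circleIntegral, deriv_circleMap, sub_zero, smul_eq_mul]
    congr 1
    rw [hKn, ← intervalIntegral.integral_const_mul]
    apply intervalIntegral.integral_congr
    intro θ _
    have hz := hz_ne θ
    beta_reduce
    rw [zpow_neg, zpow_natCast]
    field_simp
    ring_nf
    rw [← mul_pow, mul_inv_cancel₀ hz, one_pow, one_mul]
  have habsKn : ‖iteratedDeriv n p 0‖
      = (n.factorial : ℝ) * ((2*π)⁻¹ * ‖Kn‖) := by
    rw [hiter, hcoeff]
    simp [norm_mul, norm_inv, Complex.norm_I, Complex.norm_natCast, Complex.norm_real,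
      abs_of_pos Real.pi_pos]
  rw [habsKn]
  have h1 : (2*π)⁻¹ * ‖Kn‖ ≤ (2*π)⁻¹ * ((4*π) / r ^ n) :=
    mul_le_mul_of_nonneg_left hbound (by positivity)
  calc (n.factorial : ℝ) * ((2*π)⁻¹ * ‖Kn‖)
      ≤ (n.factorial : ℝ) * ((2*π)⁻¹ * ((4*π) / r ^ n)) :=
        mul_le_mul_of_nonneg_left h1 (by positivity)
    _ = 2 * n.factorial / r ^ n := by
        field_simp
        ring

lemma carath (p : ℂ → ℂ) (hp : AnalyticOnNhd ℂ p (ball (0:ℂ) 1)) (h0 : p 0 = 1)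
    (hre : ∀ z ∈ ball (0:ℂ) 1, 0 < (p z).re) (n : ℕ) (hn : 1 ≤ n) :
    ‖iteratedDeriv n p 0‖ ≤ 2 * n.factorial := by
  have ht : Filter.Tendsto (fun r : ℝ => 2 * (n.factorial : ℝ) / r ^ n) (nhdsWithin 1 (Iio 1))
      (nhds (2 * n.factorial)) := by
    have hc : ContinuousAt (fun r : ℝ => 2 * (n.factorial : ℝ) / r ^ n) 1 :=
      ContinuousAt.div continuousAt_const ((continuous_pow n).continuousAt) (by norm_num)
    have := hc.tendsto.mono_left (nhdsWithin_le_nhds (s := Iio 1))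
    simpa using this
  refine ge_of_tendsto ht ?_
  filter_upwards [Ioo_mem_nhdsLT_of_mem (by constructor <;> norm_num : (1:ℝ) ∈ Ioc 0 1)]
    with r hr
  exact carath_r p hp h0 hre hr.1 hr.2 n hn

theorem a2_a3_bounds (f : ℂ → ℂ) (hf : IsInClassF f) :
    ‖iteratedDeriv 2 f 0 / 2‖ ≤ 3/2 ∧
    ‖3 * (iteratedDeriv 3 f 0 / 6) - 2 * (iteratedDeriv 2 f 0 / 2) ^ 2‖
      ≤ 3/2 := by
  obtain ⟨hA, hf0, hf1, hne, hhyp⟩ := hf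
  have h0mem : (0:ℂ) ∈ ball (0:ℂ) 1 := mem_ball_self one_pos
  set g : ℂ → ℂ := deriv f with hgdef
  set A : ℂ → ℂ := deriv g with hAdef
  set p : ℂ → ℂ := fun z => 1 + (2/3 : ℂ) * (z * A z / g z) with hpdef
  have hg : AnalyticOnNhd ℂ g (ball (0:ℂ) 1) := hA.deriv
  have hA' : AnalyticOnNhd ℂ A (ball (0:ℂ) 1) := hg.deriv
  have hA'' : AnalyticOnNhd ℂ (deriv A) (ball (0:ℂ) 1) := hA'.deriv
  have hp : AnalyticOnNhd ℂ p (ball (0:ℂ) 1) := by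
    apply analyticOnNhd_const.add
    apply analyticOnNhd_const.mul
    exact (analyticOnNhd_id.mul hA').div hg hne
  have hp0 : p 0 = 1 := by simp [hpdef]
  have hpre : ∀ z ∈ ball (0:ℂ) 1, 0 < (p z).re := by
    intro z hz
    have h := hhyp z hz
    have hre2 : (z * A z / g z).re > -(3/2) := by
      have : (1 + z * A z / g z).re = 1 + (z * A z / g z).re := by
        simp [Complex.add_re]
      rw [this] at h
      linarith
    have : (p z).re = 1 + (2/3) * (z * A z / g z).re := by
      simp [hpdef, Complex.add_re, Complex.mul_re]
    rw [this]
    linarith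
  -- first derivative of p on the ball
  set F : ℂ → ℂ := fun z =>
    (2/3 : ℂ) * (((1 * A z + z * deriv A z) * g z - z * A z * A z) / g z ^ 2) with hFdef
  have hEq : Set.EqOn (deriv p) F (ball (0:ℂ) 1) := by
    intro z hz
    have dAz : DifferentiableAt ℂ A z := (hA' z hz).differentiableAt
    have dA'z : DifferentiableAt ℂ (deriv A) z := (hA'' z hz).differentiableAt
    have hgz : HasDerivAt g (A z) z := (hg z hz).differentiableAt.hasDerivAt
    have h4 : HasDerivAt (fun w => w * A w) (1 * A z + z * deriv A z) z :=
      (hasDerivAt_id z).mul dAz.hasDerivAt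
    have hq : HasDerivAt (fun w => w * A w / g w)
        (((1 * A z + z * deriv A z) * g z - z * A z * A z) / g z ^ 2) z :=
      h4.div hgz (hne z hz)
    have hp' : HasDerivAt p
        ((2/3 : ℂ) * (((1 * A z + z * deriv A z) * g z - z * A z * A z) / g z ^ 2)) z :=
      (hq.const_mul (2/3 : ℂ)).const_add 1
    exact hp'.deriv
  have hd1 : deriv p 0 = (2/3 : ℂ) * A 0 := by
    rw [hEq h0mem, hFdef]
    simp only []
    rw [show g 0 = 1 from hf1]
    ring
  -- second derivative of p at 0
  have hEq2 : deriv (deriv p) 0 = deriv F 0 := by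
    apply Filter.EventuallyEq.deriv_eq
    exact Filter.eventuallyEq_of_mem (isOpen_ball.mem_nhds h0mem) hEq
  have hd2 : deriv (deriv p) 0 = (2/3 : ℂ) * (2 * deriv A 0 - 2 * (A 0)^2) := by
    rw [hEq2]
    have dA0 : DifferentiableAt ℂ A 0 := (hA' 0 h0mem).differentiableAt
    have dA'0 : DifferentiableAt ℂ (deriv A) 0 := (hA'' 0 h0mem).differentiableAt
    have hg0 : HasDerivAt g (A 0) 0 := (hg 0 h0mem).differentiableAt.hasDerivAt
    have h1 : HasDerivAt (fun z => z * deriv A z)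
        (1 * deriv A 0 + 0 * deriv (deriv A) 0) 0 :=
      (hasDerivAt_id 0).mul dA'0.hasDerivAt
    have h1' : HasDerivAt (fun z => 1 * A z) (1 * deriv A 0) 0 :=
      (dA0.hasDerivAt).const_mul 1
    have h2 : HasDerivAt (fun z => 1 * A z + z * deriv A z)
        (1 * deriv A 0 + (1 * deriv A 0 + 0 * deriv (deriv A) 0)) 0 := h1'.add h1
    have h3 : HasDerivAt (fun z => (1 * A z + z * deriv A z) * g z)
        ((1 * deriv A 0 + (1 * deriv A 0 + 0 * deriv (deriv A) 0)) * g 0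
          + (1 * A 0 + 0 * deriv A 0) * A 0) 0 := h2.mul hg0
    have h4 : HasDerivAt (fun z => z * A z) (1 * A 0 + 0 * deriv A 0) 0 :=
      (hasDerivAt_id 0).mul dA0.hasDerivAt
    have h5 : HasDerivAt (fun z => z * A z * A z)
        ((1 * A 0 + 0 * deriv A 0) * A 0 + 0 * A 0 * deriv A 0) 0 := h4.mul dA0.hasDerivAt
    have hN : HasDerivAt (fun z => (1 * A z + z * deriv A z) * g z - z * A z * A z)
        ((1 * deriv A 0 + (1 * deriv A 0 + 0 * deriv (deriv A) 0)) * g 0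
          + (1 * A 0 + 0 * deriv A 0) * A 0
          - ((1 * A 0 + 0 * deriv A 0) * A 0 + 0 * A 0 * deriv A 0)) 0 := h3.sub h5
    have hD : HasDerivAt (fun z => g z ^ 2) ((2:ℕ) * g 0 ^ 1 * A 0) 0 := hg0.pow 2
    have hD0 : g 0 ^ 2 ≠ 0 := by rw [show g 0 = 1 from hf1]; norm_num
    have hQ := hN.div hD hD0
    have hF' := (hQ.const_mul (2/3 : ℂ))
    have : deriv F 0 = _ := hF'.deriv
    rw [this, show g 0 = 1 from hf1]
    push_cast
    ring
  -- apply the Carathéodory bounds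
  have b1 := carath p hp hp0 hpre 1 le_rfl
  have b2 := carath p hp hp0 hpre 2 (by norm_num)
  rw [show iteratedDeriv 1 p 0 = deriv p 0 by simp [iteratedDeriv_one], hd1] at b1
  rw [show iteratedDeriv 2 p 0 = deriv (deriv p) 0 by
    simp [iteratedDeriv_succ, iteratedDeriv_zero], hd2] at b2
  have hA0 : A 0 = iteratedDeriv 2 f 0 := by
    simp [hAdef, hgdef, iteratedDeriv_succ, iteratedDeriv_zero]
  have hA'0 : deriv A 0 = iteratedDeriv 3 f 0 := by
    simp [hAdef, hgdef, iteratedDeriv_succ, iteratedDeriv_zero]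
  rw [hA0] at b1
  rw [hA0, hA'0] at b2
  have habs23 : ‖(2/3 : ℂ)‖ = 2/3 := by
    rw [show (2/3 : ℂ) = ((2/3 : ℝ) : ℂ) by push_cast; ring, Complex.norm_real]
    norm_num
  have habs43 : ‖(4/3 : ℂ)‖ = 4/3 := by
    rw [show (4/3 : ℂ) = ((4/3 : ℝ) : ℂ) by push_cast; ring, Complex.norm_real]
    norm_num
  rw [norm_mul, habs23] at b1
  norm_num at b1
  rw [show (2/3 : ℂ) * (2 * iteratedDeriv 3 f 0 - 2 * iteratedDeriv 2 f 0 ^ 2)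
    = (4/3 : ℂ) * (iteratedDeriv 3 f 0 - iteratedDeriv 2 f 0 ^ 2) by ring,
    norm_mul, habs43] at b2
  norm_num at b2
  constructor
  · rw [norm_div, Complex.norm_two]
    linarith
  · rw [show (3 : ℂ) * (iteratedDeriv 3 f 0 / 6) - 2 * (iteratedDeriv 2 f 0 / 2) ^ 2
      = (iteratedDeriv 3 f 0 - (iteratedDeriv 2 f 0)^2) / 2 by ring, norm_div,
      Complex.norm_two]
    linarith
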